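/- Fix N ≥ 3 and an integer k ≥ 2, set n_ℓ = k^{N^{3ℓ}} and f_ℓ(x) = x_N ∏_{i=1}^{N−1} sin²(n_ℓ xᵢ). Let 𝓵 = (ℓ₁,…,ℓ_N) ∈ {1,…,k}^N have not all entries equal, let H_𝓵(x) be the N×N matrix with (i,j) entry ∂ᵢ∂ⱼ f_{ℓᵢ}(x), set ℓ* = max_i ℓᵢ, I = {i : ℓᵢ = ℓ*}, and m = #I. There is a constant C > 0 depending only on N such that: for every subset J ⊆ {1,…,N} with #J = m, there exist a natural number α ≤ m and complex coefficients (c_z)_{z ∈ Λ}, where Λ = {z ∈ ℤ^{N−1} : |zᵢ| ≤ N−1 for all i}, such that det(H_𝓵^{(I,J)})(x) = x_N^α Σ_{z ∈ Λ} c_z e^{2 n_{ℓ*} i z·x̂} for all x = (x̂, x_N) ∈ ℝ^{N−1} × ℝ, and |c_z| ≤ C n_{ℓ*}^{2m} for all z ∈ Λ. -/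

import Mathlib

open MeasureTheory Real Filter

noncomputable section

abbrev Eu (N : ℕ) : Type := EuclideanSpace ℝ (Fin N)

def ebasis {N : ℕ} (i : Fin N) : Eu N := EuclideanSpace.single i 1

/-- Partial derivative `∂ᵢ u (x)`. -/
def pd {N : ℕ} (u : Eu N → ℝ) (i : Fin N) (x : Eu N) : ℝ :=
  fderiv ℝ u x (ebasis i)

/-- Second partial derivative `∂ᵢ∂ⱼ u (x)`. -/
def pd2 {N : ℕ} (u : Eu N → ℝ) (i j : Fin N) (x : Eu N) : ℝ :=
  fderiv ℝ (fun y => fderiv ℝ u y (ebasis j)) x (ebasis i)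

/-- The determinant of the Hessian matrix `det (D²u)(x)`. -/
def hessDet {N : ℕ} (u : Eu N → ℝ) (x : Eu N) : ℝ :=
  (Matrix.of fun i j => pd2 u i j x).det

/-- The Besov norm `‖u‖_{s,p}`. -/
def besov (N : ℕ) (s p : ℝ) (u : Eu N → ℝ) : ℝ :=
  (∫ x : Eu N, |u x| ^ p) ^ (1/p)
  + (∫ x : Eu N, ‖fderiv ℝ u x‖ ^ p) ^ (1/p)
  + (∫ x : Eu N, ∫ y : Eu N,
      ‖fderiv ℝ u x - fderiv ℝ u y‖ ^ p / ‖x - y‖ ^ ((N : ℝ) + (s-1)*p)) ^ (1/p)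

/-- The index of the last coordinate (`x_N`) of `ℝ^N`. -/
def lastIdx (N : ℕ) (hN : 0 < N) : Fin N := ⟨N - 1, Nat.sub_lt hN Nat.one_pos⟩

/-- The lacunary sequence `n_ℓ = k^{N^{3ℓ}}`. -/
def nseq (N k l : ℕ) : ℕ := k ^ (N ^ (3 * l))

/-- `∏_{i=1}^{N-1} sin²(n xᵢ)`. -/
def gfun (N : ℕ) (n : ℝ) (x : Eu N) : ℝ :=
  ∏ i : Fin (N-1), (Real.sin (n * x (Fin.castLE (Nat.sub_le N 1) i)))^2

/-- The atom `f(x) = x_N ∏_{i=1}^{N-1} sin²(n xᵢ)`. -/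
def ffun (N : ℕ) (hN : 0 < N) (n : ℝ) (x : Eu N) : ℝ :=
  x (lastIdx N hN) * gfun N n x

/-- `w_k(x) = Σ_{ℓ=1}^k n_ℓ^{-(2-2/N)} ℓ^{-1/N} ∏_{i=1}^{N-1} sin²(n_ℓ xᵢ)`. -/
def wfun (N k : ℕ) (x : Eu N) : ℝ :=
  ∑ l ∈ Finset.Icc 1 k,
    ((nseq N k l : ℝ)) ^ (-(2 - 2/(N:ℝ))) * ((l : ℝ)) ^ (-(1/(N:ℝ))) * gfun N (nseq N k l) x

/-- `u_k(x) = χ(x) w_k(x) x_N`. -/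
def ufun (N : ℕ) (hN : 0 < N) (k : ℕ) (χ : Eu N → ℝ) (x : Eu N) : ℝ :=
  χ x * wfun N k x * x (lastIdx N hN)

/-- The `C²` norm: supremum of all partial derivatives of order `≤ 2`. -/
def C2norm {N : ℕ} (φ : Eu N → ℝ) : ℝ :=
  ⨆ x : Eu N, max |φ x| (max (‖iteratedFDeriv ℝ 1 φ x‖) (‖iteratedFDeriv ℝ 2 φ x‖))

/-- The `C¹` norm: supremum of all partial derivatives of order `≤ 1`. -/
def C1norm {N : ℕ} (φ : Eu N → ℝ) : ℝ :=
  ⨆ x : Eu N, max |φ x| (‖iteratedFDeriv ℝ 1 φ x‖)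

/-- Glue `x̂ ∈ ℝ^{N-1}` and `t ∈ ℝ` into the point `(x̂, t) ∈ ℝ^N`. -/
def glue (N : ℕ) (hN : 0 < N) (xh : Eu (N-1)) (t : ℝ) : Eu N :=
  WithLp.toLp 2 (fun i => if h : (i : ℕ) < N - 1 then xh ⟨i, h⟩ else t)

namespace Stmt16

variable {d : ℕ}

def coordProd (φ : Fin (d+1) → ℝ → ℝ) (x : Eu (d+1)) : ℝ := ∏ i, φ i (x i)

lemma coordProd_update (φ : Fin (d+1) → ℝ → ℝ) (j : Fin (d+1)) (b : ℝ → ℝ) (x : Eu (d+1)) :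
    coordProd (Function.update φ j b) x = b (x j) * ∏ k ∈ Finset.univ.erase j, φ k (x k) := by
  have h : (fun i => Function.update φ j b i (x i)) =
      Function.update (fun i => φ i (x i)) j (b (x j)) := by
    funext i
    rcases eq_or_ne i j with rfl | hij
    · simp
    · simp [Function.update_of_ne hij]
  rw [coordProd]
  calc ∏ i, Function.update φ j b i (x i) = ∏ i, Function.update (fun i => φ i (x i)) j (b (x j)) i := by
        rw [h]
    _ = _ := by
        rw [Finset.prod_update_of_mem (Finset.mem_univ j), Finset.sdiff_singleton_eq_erase]

lemma hasFDerivAt_coordProd (φ : Fin (d+1) → ℝ → ℝ) (hφ : ∀ i, Differentiable ℝ (φ i))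
    (x : Eu (d+1)) :
    HasFDerivAt (coordProd φ)
      (∑ i, (∏ j ∈ Finset.univ.erase i, φ j (x j)) •
        (deriv (φ i) (x i) • (EuclideanSpace.proj i : Eu (d+1) →L[ℝ] ℝ))) x := by
  have h : ∀ i ∈ (Finset.univ : Finset (Fin (d+1))),
      HasFDerivAt (fun y : Eu (d+1) => φ i (y i))
        (deriv (φ i) (x i) • (EuclideanSpace.proj i : Eu (d+1) →L[ℝ] ℝ)) x := by
    intro i _
    have hp : HasFDerivAt (fun y : Eu (d+1) => y i)
        (EuclideanSpace.proj i : Eu (d+1) →L[ℝ] ℝ) x := by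
      exact (EuclideanSpace.proj (𝕜 := ℝ) i).hasFDerivAt
    exact HasDerivAt.comp_hasFDerivAt x ((hφ i).differentiableAt.hasDerivAt) hp
  exact HasFDerivAt.finset_prod h

lemma pd_coordProd (φ : Fin (d+1) → ℝ → ℝ) (hφ : ∀ i, Differentiable ℝ (φ i)) (j : Fin (d+1)) :
    pd (coordProd φ) j = coordProd (Function.update φ j (deriv (φ j))) := by
  funext x
  have h := (hasFDerivAt_coordProd φ hφ x).fderiv
  rw [pd, h]
  simp only [ContinuousLinearMap.coe_sum', Finset.sum_apply, ContinuousLinearMap.coe_smul',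
    Pi.smul_apply, ContinuousLinearMap.smul_apply]
  have hproj : ∀ i : Fin (d+1), (EuclideanSpace.proj i : Eu (d+1) →L[ℝ] ℝ) (ebasis j)
      = if i = j then 1 else 0 := by
    intro i
    simp [ebasis, EuclideanSpace.single_apply]
  rw [Finset.sum_eq_single j]
  · rw [hproj j, if_pos rfl, coordProd_update]
    simp [mul_comm]
  · intro i _ hij
    rw [hproj i, if_neg hij]
    simp
  · intro h; exact absurd (Finset.mem_univ j) h

lemma pd2_coordProd (φ : Fin (d+1) → ℝ → ℝ) (hφ : ∀ i, Differentiable ℝ (φ i))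
    (hφ' : ∀ i, Differentiable ℝ (deriv (φ i))) (i j : Fin (d+1)) :
    pd2 (coordProd φ) i j =
      coordProd (Function.update (Function.update φ j (deriv (φ j))) i
        (deriv (Function.update φ j (deriv (φ j)) i))) := by
  have h1 : (fun y => fderiv ℝ (coordProd φ) y (ebasis j)) = coordProd (Function.update φ j (deriv (φ j))) :=
    pd_coordProd φ hφ j
  have h2 : ∀ k, Differentiable ℝ (Function.update φ j (deriv (φ j)) k) := by
    intro k
    rcases eq_or_ne k j with rfl | hk
    · rw [Function.update_self]; exact hφ' k
    · rw [Function.update_of_ne hk]; exact hφ k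
  funext x
  rw [pd2, h1, ← pd, pd_coordProd _ h2 i]

end Stmt16

namespace Stmt16

variable {d : ℕ}

/-- The character `e^{2 n i z· x̂}`. -/
def eChar (d : ℕ) (n : ℝ) (z : Fin d → ℤ) (x : Eu (d+1)) : ℂ :=
  Complex.exp (2 * (n:ℂ) * Complex.I * ∑ i : Fin d, (z i : ℂ) * ((x (Fin.castSucc i) : ℝ) : ℂ))

lemma eChar_add (n : ℝ) (z w : Fin d → ℤ) (x : Eu (d+1)) :
    eChar d n (z + w) x = eChar d n z x * eChar d n w x := by
  rw [eChar, eChar, eChar, ← Complex.exp_add]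
  congr 1
  have : ∑ i : Fin d, (((z + w) i : ℤ) : ℂ) * ((x (Fin.castSucc i) : ℝ) : ℂ)
      = ∑ i : Fin d, ((z i : ℂ) * ((x (Fin.castSucc i) : ℝ) : ℂ)
        + (w i : ℂ) * ((x (Fin.castSucc i) : ℝ) : ℂ)) := by
    apply Finset.sum_congr rfl; intro i _
    push_cast [Pi.add_apply]; ring
  rw [this, Finset.sum_add_distrib]; ring

/-- Trigonometric polynomial with frequencies in the box `[-M, M]`, total coefficient mass
at most `B`. -/
def IsTP (d : ℕ) (n : ℝ) (B : ℝ) (M : Fin d → ℤ) (h : Eu (d+1) → ℂ) : Prop :=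
  ∃ c : (Fin d → ℤ) → ℂ,
    (∀ z, z ∉ Finset.Icc (-M) M → c z = 0) ∧
    (∑ z ∈ Finset.Icc (-M) M, ‖c z‖) ≤ B ∧
    ∀ x, h x = ∑ z ∈ Finset.Icc (-M) M, c z * eChar d n z x

lemma mem_boxIcc {M z : Fin d → ℤ} : z ∈ Finset.Icc (-M) M ↔ ∀ i, -M i ≤ z i ∧ z i ≤ M i := by
  simp [Finset.mem_Icc, Pi.le_def, forall_and]

lemma isTP_nonneg {n B : ℝ} {M : Fin d → ℤ} {h : Eu (d+1) → ℂ} (hh : IsTP d n B M h) : 0 ≤ B := by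
  obtain ⟨c, -, hB, -⟩ := hh
  exact le_trans (Finset.sum_nonneg fun z _ => norm_nonneg _) hB

lemma isTP_mono {n B B' : ℝ} {M M' : Fin d → ℤ} {h : Eu (d+1) → ℂ}
    (hh : IsTP d n B M h) (hM : M ≤ M') (hB : B ≤ B') : IsTP d n B' M' h := by
  obtain ⟨c, hc0, hc1, hce⟩ := hh
  have hsub : Finset.Icc (-M) M ⊆ Finset.Icc (-M') M' :=
    Finset.Icc_subset_Icc (neg_le_neg hM) hM
  refine ⟨c, ?_, ?_, ?_⟩
  · intro z hz; exact hc0 z fun hmem => hz (hsub hmem)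
  · calc ∑ z ∈ Finset.Icc (-M') M', ‖c z‖
        = ∑ z ∈ Finset.Icc (-M) M, ‖c z‖ := by
          refine (Finset.sum_subset hsub ?_).symm
          intro z _ hz; rw [hc0 z hz]; simp
      _ ≤ B' := le_trans hc1 hB
  · intro x
    rw [hce x]
    refine Finset.sum_subset hsub ?_
    intro z _ hz; rw [hc0 z hz]; simp

lemma isTP_zero {n : ℝ} {B : ℝ} {M : Fin d → ℤ} (hB : 0 ≤ B) :
    IsTP d n B M (fun _ => 0) := by
  refine ⟨fun _ => 0, fun _ _ => rfl, by simpa using hB, fun x => by simp⟩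

lemma isTP_single {n : ℝ} (a : ℂ) (z₀ M : Fin d → ℤ) (hz : z₀ ∈ Finset.Icc (-M) M) :
    IsTP d n (‖a‖) M (fun x => a * eChar d n z₀ x) := by
  refine ⟨fun z => if z = z₀ then a else 0, ?_, ?_, ?_⟩
  · intro z hz'; dsimp only; rw [if_neg]; rintro rfl; exact hz' hz
  · dsimp only
    simp only [apply_ite (fun w : ℂ => ‖w‖), norm_zero, Finset.sum_ite_eq', if_pos hz, le_refl]
  · intro x
    dsimp only
    simp only [ite_mul, zero_mul, Finset.sum_ite_eq', if_pos hz]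

lemma isTP_add {n B B' : ℝ} {M : Fin d → ℤ} {h h' : Eu (d+1) → ℂ}
    (hh : IsTP d n B M h) (hh' : IsTP d n B' M h') :
    IsTP d n (B + B') M (fun x => h x + h' x) := by
  obtain ⟨c, hc0, hc1, hce⟩ := hh
  obtain ⟨c', hc0', hc1', hce'⟩ := hh'
  refine ⟨fun z => c z + c' z, ?_, ?_, ?_⟩
  · intro z hz; dsimp only; rw [hc0 z hz, hc0' z hz, add_zero]
  · calc ∑ z ∈ Finset.Icc (-M) M, ‖c z + c' z‖
        ≤ ∑ z ∈ Finset.Icc (-M) M, (‖c z‖ + ‖c' z‖) :=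
          Finset.sum_le_sum fun z _ => norm_add_le _ _
      _ ≤ B + B' := by rw [Finset.sum_add_distrib]; exact add_le_add hc1 hc1'
  · intro x; dsimp only; rw [hce x, hce' x, ← Finset.sum_add_distrib]
    apply Finset.sum_congr rfl; intro z _; ring

lemma isTP_cmul {n B : ℝ} {M : Fin d → ℤ} {h : Eu (d+1) → ℂ} (a : ℂ)
    (hh : IsTP d n B M h) : IsTP d n (‖a‖ * B) M (fun x => a * h x) := by
  obtain ⟨c, hc0, hc1, hce⟩ := hh
  refine ⟨fun z => a * c z, ?_, ?_, ?_⟩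
  · intro z hz; dsimp only; rw [hc0 z hz, mul_zero]
  · calc ∑ z ∈ Finset.Icc (-M) M, ‖a * c z‖
        = ‖a‖ * ∑ z ∈ Finset.Icc (-M) M, ‖c z‖ := by
          rw [Finset.mul_sum]; exact Finset.sum_congr rfl fun z _ => norm_mul _ _
      _ ≤ ‖a‖ * B := by
          exact mul_le_mul_of_nonneg_left hc1 (norm_nonneg _)
  · intro x; dsimp only; rw [hce x, Finset.mul_sum]
    apply Finset.sum_congr rfl; intro z _; ring

/-- Shifted summation over a box. -/
lemma sum_shift {β : Type*} [AddCommMonoid β] (K M' : Fin d → ℤ) (z : Fin d → ℤ)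
    (F : (Fin d → ℤ) → β)
    (hsupp : ∀ v, v - z ∉ Finset.Icc (-M') M' → F v = 0)
    (hbox : ∀ w ∈ Finset.Icc (-M') M', z + w ∈ Finset.Icc (-K) K) :
    ∑ v ∈ Finset.Icc (-K) K, F v = ∑ w ∈ Finset.Icc (-M') M', F (z + w) := by
  have h1 : ∑ w ∈ Finset.Icc (-M') M', F (z + w)
      = ∑ v ∈ (Finset.Icc (-M') M').map (addLeftEmbedding z), F v := by
    rw [Finset.sum_map]
    exact Finset.sum_congr rfl fun w _ => by rw [addLeftEmbedding_apply]
  rw [h1]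
  refine (Finset.sum_subset ?_ ?_).symm
  · intro v hv
    rw [Finset.mem_map] at hv
    obtain ⟨w, hw, hwv⟩ := hv
    rw [addLeftEmbedding_apply] at hwv
    rw [← hwv]
    exact hbox w hw
  · intro v _ hv
    apply hsupp
    intro hmem
    apply hv
    rw [Finset.mem_map]
    exact ⟨v - z, hmem, by rw [addLeftEmbedding_apply]; simp⟩

lemma isTP_mul {n B B' : ℝ} {M M' : Fin d → ℤ} {h h' : Eu (d+1) → ℂ}
    (hh : IsTP d n B M h) (hh' : IsTP d n B' M' h') :
    IsTP d n (B * B') (M + M') (fun x => h x * h' x) := by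
  obtain ⟨c, hc0, hc1, hce⟩ := hh
  obtain ⟨c', hc0', hc1', hce'⟩ := hh'
  have hB' : 0 ≤ B' := le_trans (Finset.sum_nonneg fun z _ => norm_nonneg _) hc1'
  have hboxadd : ∀ z ∈ Finset.Icc (-M) M, ∀ w ∈ Finset.Icc (-M') M',
      z + w ∈ Finset.Icc (-(M+M')) (M+M') := by
    intro z hz w hw
    rw [mem_boxIcc] at hz hw ⊢
    intro i
    obtain ⟨h1, h2⟩ := hz i; obtain ⟨h3, h4⟩ := hw i
    simp only [Pi.add_apply]
    omega
  refine ⟨fun v => ∑ z ∈ Finset.Icc (-M) M, c z * c' (v - z), ?_, ?_, ?_⟩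
  · intro v hv
    apply Finset.sum_eq_zero
    intro z hz
    have : v - z ∉ Finset.Icc (-M') M' := by
      intro hmem
      apply hv
      have := hboxadd z hz (v - z) hmem
      simpa using this
    rw [hc0' _ this, mul_zero]
  · calc ∑ v ∈ Finset.Icc (-(M+M')) (M+M'), ‖∑ z ∈ Finset.Icc (-M) M, c z * c' (v - z)‖
        ≤ ∑ v ∈ Finset.Icc (-(M+M')) (M+M'), ∑ z ∈ Finset.Icc (-M) M,
            ‖c z‖ * ‖c' (v - z)‖ := by
          refine Finset.sum_le_sum fun v _ => ?_
          refine le_trans (norm_sum_le _ _) ?_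
          exact le_of_eq (Finset.sum_congr rfl fun z _ => norm_mul _ _)
      _ = ∑ z ∈ Finset.Icc (-M) M, ∑ v ∈ Finset.Icc (-(M+M')) (M+M'),
            ‖c z‖ * ‖c' (v - z)‖ := Finset.sum_comm
      _ ≤ ∑ z ∈ Finset.Icc (-M) M, ‖c z‖ * B' := by
          refine Finset.sum_le_sum fun z hz => ?_
          rw [← Finset.mul_sum]
          refine mul_le_mul_of_nonneg_left ?_ (norm_nonneg _)
          have := sum_shift (M + M') M' z (fun v => ‖c' (v - z)‖)
            (fun v hv => by rw [hc0' _ hv]; simp) (fun w hw => hboxadd z hz w hw)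
          rw [show (∑ v ∈ Finset.Icc (-(M+M')) (M+M'), ‖c' (v - z)‖)
              = ∑ w ∈ Finset.Icc (-M') M', ‖c' (z + w - z)‖ from this]
          simp only [add_sub_cancel_left]
          exact hc1'
      _ ≤ B * B' := by
          rw [← Finset.sum_mul]
          exact mul_le_mul_of_nonneg_right hc1 hB'
  · intro x
    dsimp only
    rw [hce x, hce' x, Finset.sum_mul_sum]
    symm
    calc ∑ v ∈ Finset.Icc (-(M+M')) (M+M'),
          (∑ z ∈ Finset.Icc (-M) M, c z * c' (v - z)) * eChar d n v x
        = ∑ z ∈ Finset.Icc (-M) M, ∑ v ∈ Finset.Icc (-(M+M')) (M+M'),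
            c z * c' (v - z) * eChar d n v x := by
          rw [← Finset.sum_comm]
          exact Finset.sum_congr rfl fun v _ => Finset.sum_mul _ _ _
      _ = ∑ z ∈ Finset.Icc (-M) M, ∑ w ∈ Finset.Icc (-M') M',
            c z * c' (z + w - z) * eChar d n (z + w) x := by
          refine Finset.sum_congr rfl fun z hz => ?_
          exact sum_shift (M+M') M' z (fun v => c z * c' (v - z) * eChar d n v x)
            (fun v hv => by rw [hc0' _ hv]; ring) (fun w hw => hboxadd z hz w hw)
      _ = ∑ z ∈ Finset.Icc (-M) M, ∑ w ∈ Finset.Icc (-M') M',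
            c z * eChar d n z x * (c' w * eChar d n w x) := by
          refine Finset.sum_congr rfl fun z _ => Finset.sum_congr rfl fun w _ => ?_
          rw [add_sub_cancel_left, eChar_add]; ring

end Stmt16

namespace Stmt16

variable {d : ℕ}

lemma isTP_one {n : ℝ} : IsTP d n 1 0 (fun _ => (1:ℂ)) := by
  have h := isTP_single (d := d) (n := n) (1:ℂ) 0 0 (by simp)
  have he : (fun x : Eu (d+1) => (1:ℂ) * eChar d n 0 x) = fun _ => (1:ℂ) := by
    funext x; simp [eChar]
  rw [he] at h
  simpa using h

lemma isTP_prod {ι : Type*} [DecidableEq ι] {n : ℝ} (s : Finset ι)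
    (f : ι → Eu (d+1) → ℂ) (B : ι → ℝ) (M : ι → Fin d → ℤ)
    (h : ∀ i ∈ s, IsTP d n (B i) (M i) (f i)) :
    IsTP d n (∏ i ∈ s, B i) (∑ i ∈ s, M i) (fun x => ∏ i ∈ s, f i x) := by
  induction s using Finset.cons_induction with
  | empty => simpa using isTP_one
  | cons a s ha ih =>
    rw [Finset.prod_cons, Finset.sum_cons]
    have h1 := h a (Finset.mem_cons_self a s)
    have h2 := ih fun i hi => h i (Finset.mem_cons_of_mem hi)
    have := isTP_mul h1 h2
    convert this using 2 with x
    rw [Finset.prod_cons]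

lemma isTP_sum {ι : Type*} {n B : ℝ} (s : Finset ι)
    (f : ι → Eu (d+1) → ℂ) (M : Fin d → ℤ)
    (h : ∀ i ∈ s, IsTP d n B M (f i)) (hB : 0 ≤ B) :
    IsTP d n (s.card * B) M (fun x => ∑ i ∈ s, f i x) := by
  classical
  induction s using Finset.cons_induction with
  | empty => simpa using isTP_zero (d := d) (n := n) (M := M) (le_refl (0:ℝ))
  | cons a s ha ih =>
    rw [Finset.card_cons]
    have h1 := h a (Finset.mem_cons_self a s)
    have h2 := ih fun i hi => h i (Finset.mem_cons_of_mem hi)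
    have := isTP_add h1 h2
    have heq : (fun x => f a x + ∑ i ∈ s, f i x) = fun x => ∑ i ∈ Finset.cons a s ha, f i x := by
      funext x; rw [Finset.sum_cons]
    rw [heq] at this
    convert this using 1
    push_cast; ring

lemma isTP_extract {n B : ℝ} {M M' : Fin d → ℤ} {h : Eu (d+1) → ℂ}
    (hh : IsTP d n B M h) (hM : M ≤ M') :
    ∃ c : (Fin d → ℤ) → ℂ,
      (∀ x, h x = ∑ z ∈ Finset.Icc (-M') M', c z * eChar d n z x) ∧
      (∀ z, ‖c z‖ ≤ B) := by
  obtain ⟨c, hc0, hc1, hce⟩ := isTP_mono hh hM le_rfl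
  refine ⟨c, hce, ?_⟩
  intro z
  by_cases hz : z ∈ Finset.Icc (-M') M'
  · exact le_trans (Finset.single_le_sum (f := fun w => ‖c w‖)
      (fun w _ => norm_nonneg _) hz) hc1
  · rw [hc0 z hz]
    simpa using le_trans (Finset.sum_nonneg fun w _ => norm_nonneg _) hc1

end Stmt16

namespace Stmt16

variable {d : ℕ}

def fA (n : ℝ) : ℝ → ℝ := fun t => Real.sin (n * t) ^ 2
def fA' (n : ℝ) : ℝ → ℝ := fun t => n * Real.sin (2 * n * t)
def fA'' (n : ℝ) : ℝ → ℝ := fun t => 2 * n ^ 2 * Real.cos (2 * n * t)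

lemma hasDerivAt_fA (n t : ℝ) : HasDerivAt (fA n) (fA' n t) t := by
  have h1 : HasDerivAt (fun t : ℝ => n * t) n t := by
    simpa using (hasDerivAt_id t).const_mul n
  have h2 : HasDerivAt (fun t : ℝ => Real.sin (n * t)) (Real.cos (n * t) * n) t :=
    (Real.hasDerivAt_sin (n * t)).comp t h1
  have h3 := h2.pow 2
  refine h3.congr_deriv ?_
  unfold fA'; rw [show 2 * n * t = 2 * (n * t) by ring, Real.sin_two_mul]
  ring

lemma hasDerivAt_fA' (n t : ℝ) : HasDerivAt (fA' n) (fA'' n t) t := by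
  have h1 : HasDerivAt (fun t : ℝ => 2 * n * t) (2 * n) t := by
    simpa using (hasDerivAt_id t).const_mul (2 * n)
  have h2 : HasDerivAt (fun t : ℝ => Real.sin (2 * n * t)) (Real.cos (2 * n * t) * (2 * n)) t :=
    (Real.hasDerivAt_sin (2 * n * t)).comp t h1
  have h3 := h2.const_mul n
  refine h3.congr_deriv ?_
  unfold fA''; ring

lemma deriv_fA (n : ℝ) : deriv (fA n) = fA' n := funext fun t => (hasDerivAt_fA n t).deriv
lemma deriv_fA' (n : ℝ) : deriv (fA' n) = fA'' n := funext fun t => (hasDerivAt_fA' n t).deriv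
lemma diff_fA (n : ℝ) : Differentiable ℝ (fA n) := fun t => (hasDerivAt_fA n t).differentiableAt
lemma diff_fA' (n : ℝ) : Differentiable ℝ (fA' n) := fun t => (hasDerivAt_fA' n t).differentiableAt
lemma deriv_idf : deriv (fun t : ℝ => t) = fun _ => (1:ℝ) := funext fun t => deriv_id t
lemma deriv_one : deriv (fun _ : ℝ => (1:ℝ)) = fun _ => (0:ℝ) := funext fun t => deriv_const t 1

/-- δ-frequency. -/
def dz (d : ℕ) (k : Fin d) : Fin d → ℤ := fun j => if j = k then 1 else 0

lemma dz_mem (k : Fin d) : dz d k ∈ Finset.Icc (-(dz d k)) (dz d k) := by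
  rw [mem_boxIcc]; intro i; rw [dz]; split <;> omega

lemma zero_mem_dz (k : Fin d) : (0 : Fin d → ℤ) ∈ Finset.Icc (-(dz d k)) (dz d k) := by
  rw [mem_boxIcc]; intro i; simp only [Pi.zero_apply, dz]; split <;> omega

lemma neg_dz_mem (k : Fin d) : -(dz d k) ∈ Finset.Icc (-(dz d k)) (dz d k) := by
  rw [mem_boxIcc]; intro i; simp only [Pi.neg_apply, dz]; split <;> omega

lemma dz_sum (k : Fin d) (x : Eu (d+1)) :
    ∑ i : Fin d, ((dz d k i : ℤ) : ℂ) * ((x (Fin.castSucc i) : ℝ) : ℂ)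
      = ((x (Fin.castSucc k) : ℝ) : ℂ) := by
  rw [Finset.sum_eq_single_of_mem k (Finset.mem_univ k)
    (fun i _ hik => by rw [dz, if_neg hik]; simp)]
  rw [dz, if_pos rfl]; simp

lemma eChar_dz (n : ℝ) (k : Fin d) (x : Eu (d+1)) :
    eChar d n (dz d k) x
      = Complex.exp (2 * (n:ℂ) * Complex.I * ((x (Fin.castSucc k) : ℝ) : ℂ)) := by
  rw [eChar, dz_sum]

lemma eChar_neg_dz (n : ℝ) (k : Fin d) (x : Eu (d+1)) :
    eChar d n (-(dz d k)) x
      = Complex.exp (-(2 * (n:ℂ) * Complex.I * ((x (Fin.castSucc k) : ℝ) : ℂ))) := by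
  rw [eChar]
  have h1 : ∑ i : Fin d, (((-(dz d k)) i : ℤ) : ℂ) * ((x (Fin.castSucc i) : ℝ) : ℂ)
      = -∑ i : Fin d, ((dz d k i : ℤ) : ℂ) * ((x (Fin.castSucc i) : ℝ) : ℂ) := by
    rw [← Finset.sum_neg_distrib]
    apply Finset.sum_congr rfl
    intro i _
    push_cast [Pi.neg_apply]
    ring
  rw [h1, dz_sum]
  congr 1
  ring

end Stmt16

namespace Stmt16

variable {d : ℕ}

lemma ccos (θ : ℂ) : Complex.cos θ = (Complex.exp (θ * Complex.I)
    + Complex.exp (-(θ * Complex.I))) / 2 := by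
  rw [show -(θ * Complex.I) = -θ * Complex.I by ring, Complex.exp_mul_I, Complex.exp_mul_I,
    Complex.sin_neg, Complex.cos_neg]
  ring

lemma csin (θ : ℂ) : Complex.sin θ = (Complex.exp (θ * Complex.I)
    - Complex.exp (-(θ * Complex.I))) * (-Complex.I) / 2 := by
  rw [show -(θ * Complex.I) = -θ * Complex.I by ring, Complex.exp_mul_I, Complex.exp_mul_I,
    Complex.sin_neg, Complex.cos_neg]
  linear_combination (Complex.sin θ : ℂ) * Complex.I_sq

lemma csin_sq (θ : ℂ) : Complex.sin θ ^ 2 =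
    1/2 + (-(1/4) : ℂ) * Complex.exp (2 * θ * Complex.I)
        + (-(1/4) : ℂ) * Complex.exp (-(2 * θ * Complex.I)) := by
  have hE2 : Complex.exp (2 * θ * Complex.I)
      = Complex.exp (θ * Complex.I) * Complex.exp (θ * Complex.I) := by
    rw [← Complex.exp_add]; ring_nf
  have hE2' : Complex.exp (-(2 * θ * Complex.I))
      = Complex.exp (-(θ * Complex.I)) * Complex.exp (-(θ * Complex.I)) := by
    rw [← Complex.exp_add]; ring_nf
  have hEE' : Complex.exp (θ * Complex.I) * Complex.exp (-(θ * Complex.I)) = 1 := by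
    rw [← Complex.exp_add, show θ * Complex.I + -(θ * Complex.I) = 0 by ring, Complex.exp_zero]
  rw [csin, hE2, hE2']
  linear_combination ((Complex.exp (θ * Complex.I) - Complex.exp (-(θ * Complex.I)))^2/4)
      * Complex.I_sq + (1/2 : ℂ) * hEE'

lemma fA_expand (n t : ℝ) : ((fA n t : ℝ) : ℂ) =
    ((1/2 : ℝ) : ℂ) * 1
    + ((-(1/4) : ℝ) : ℂ) * Complex.exp (2 * (n:ℂ) * Complex.I * (t:ℂ))
    + ((-(1/4) : ℝ) : ℂ) * Complex.exp (-(2 * (n:ℂ) * Complex.I * (t:ℂ))) := by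
  rw [fA]
  push_cast
  rw [csin_sq, show (2 * ((n:ℂ) * t) * Complex.I) = 2 * (n:ℂ) * Complex.I * t by ring]
  ring

lemma fA'_expand (n t : ℝ) : ((fA' n t : ℝ) : ℂ) =
    (-(n:ℂ) * Complex.I / 2) * Complex.exp (2 * (n:ℂ) * Complex.I * (t:ℂ))
    + ((n:ℂ) * Complex.I / 2) * Complex.exp (-(2 * (n:ℂ) * Complex.I * (t:ℂ))) := by
  rw [fA']
  push_cast
  rw [csin, show ((2:ℂ) * n * t * Complex.I) = 2 * (n:ℂ) * Complex.I * t by ring]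
  ring

lemma fA''_expand (n t : ℝ) : ((fA'' n t : ℝ) : ℂ) =
    ((n:ℂ)^2) * Complex.exp (2 * (n:ℂ) * Complex.I * (t:ℂ))
    + ((n:ℂ)^2) * Complex.exp (-(2 * (n:ℂ) * Complex.I * (t:ℂ))) := by
  rw [fA'']
  push_cast
  rw [ccos, show ((2:ℂ) * n * t * Complex.I) = 2 * (n:ℂ) * Complex.I * t by ring]
  ring

end Stmt16

namespace Stmt16

variable {d : ℕ}

lemma isTP_congr {n B : ℝ} {M : Fin d → ℤ} {h h' : Eu (d+1) → ℂ}
    (hh : IsTP d n B M h) (he : ∀ x, h x = h' x) : IsTP d n B M h' := by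
  obtain ⟨c, hc0, hc1, hce⟩ := hh
  exact ⟨c, hc0, hc1, fun x => by rw [← he x, hce x]⟩

lemma eChar_zero (n : ℝ) (x : Eu (d+1)) : eChar d n 0 x = 1 := by simp [eChar]

lemma isTP_coord_fA (n : ℝ) (k : Fin d) :
    IsTP d n 1 (dz d k) (fun x => ((fA n (x (Fin.castSucc k)) : ℝ) : ℂ)) := by
  have h0 := isTP_single (d := d) (n := n) (((1/2:ℝ)):ℂ) 0 (dz d k) (zero_mem_dz k)
  have h1 := isTP_single (d := d) (n := n) (((-(1/4):ℝ)):ℂ) (dz d k) (dz d k) (dz_mem k)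
  have h2 := isTP_single (d := d) (n := n) (((-(1/4):ℝ)):ℂ) (-(dz d k)) (dz d k) (neg_dz_mem k)
  have h := isTP_add (isTP_add h0 h1) h2
  refine isTP_mono (isTP_congr h ?_) le_rfl ?_
  · intro x
    dsimp only
    rw [eChar_dz, eChar_neg_dz, eChar_zero, ← fA_expand]
  · simp only [Complex.norm_real, Real.norm_eq_abs]
    rw [abs_of_nonneg (by norm_num : (0:ℝ) ≤ 1/2), abs_of_nonpos (by norm_num : (-(1/4):ℝ) ≤ 0)]
    norm_num

lemma isTP_coord_fA' (n : ℝ) (hn : 0 ≤ n) (k : Fin d) :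
    IsTP d n n (dz d k) (fun x => ((fA' n (x (Fin.castSucc k)) : ℝ) : ℂ)) := by
  have h1 := isTP_single (d := d) (n := n) (-(n:ℂ) * Complex.I / 2) (dz d k) (dz d k) (dz_mem k)
  have h2 := isTP_single (d := d) (n := n) ((n:ℂ) * Complex.I / 2) (-(dz d k)) (dz d k)
    (neg_dz_mem k)
  have h := isTP_add h1 h2
  refine isTP_mono (isTP_congr h ?_) le_rfl ?_
  · intro x
    dsimp only
    rw [eChar_dz, eChar_neg_dz, ← fA'_expand]
  · have ha : ‖-(n:ℂ) * Complex.I / 2‖ = n / 2 := by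
      simp [norm_div, norm_mul, Complex.norm_I, Complex.norm_real, Complex.norm_two,
        abs_of_nonneg hn]
    have hb : ‖(n:ℂ) * Complex.I / 2‖ = n / 2 := by
      simp [norm_div, norm_mul, Complex.norm_I, Complex.norm_real, Complex.norm_two,
        abs_of_nonneg hn]
    rw [ha, hb]
    ring_nf
    exact le_refl _
  
lemma isTP_coord_fA'' (n : ℝ) (k : Fin d) :
    IsTP d n (2 * n^2) (dz d k) (fun x => ((fA'' n (x (Fin.castSucc k)) : ℝ) : ℂ)) := by
  have h1 := isTP_single (d := d) (n := n) ((n:ℂ)^2) (dz d k) (dz d k) (dz_mem k)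
  have h2 := isTP_single (d := d) (n := n) ((n:ℂ)^2) (-(dz d k)) (dz d k) (neg_dz_mem k)
  have h := isTP_add h1 h2
  refine isTP_mono (isTP_congr h ?_) le_rfl ?_
  · intro x
    dsimp only
    rw [eChar_dz, eChar_neg_dz, ← fA''_expand]
  · have ha : ‖(n:ℂ)^2‖ = n^2 := by
      rw [norm_pow, Complex.norm_real, Real.norm_eq_abs, sq_abs]
    rw [ha]
    ring_nf
    exact le_refl _

end Stmt16

namespace Stmt16

variable {d : ℕ}

/-- Non-dependent `Fin.snoc` for families of real functions. -/
def sf {d : ℕ} (ψ : Fin d → ℝ → ℝ) (τ : ℝ → ℝ) : Fin (d+1) → ℝ → ℝ := Fin.snoc ψ τ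

@[simp] lemma sf_last (ψ : Fin d → ℝ → ℝ) (τ : ℝ → ℝ) : sf ψ τ (Fin.last d) = τ := by
  rw [sf, Fin.snoc_last]

@[simp] lemma sf_cast (ψ : Fin d → ℝ → ℝ) (τ : ℝ → ℝ) (k : Fin d) :
    sf ψ τ (Fin.castSucc k) = ψ k := by
  rw [sf, Fin.snoc_castSucc]

lemma update_sf_last (ψ : Fin d → ℝ → ℝ) (τ b : ℝ → ℝ) :
    Function.update (sf ψ τ) (Fin.last d) b = sf ψ b := by
  rw [sf, sf, Fin.update_snoc_last]

lemma update_sf_cast (ψ : Fin d → ℝ → ℝ) (τ b : ℝ → ℝ) (k : Fin d) :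
    Function.update (sf ψ τ) (Fin.castSucc k) b = sf (Function.update ψ k b) τ := by
  rw [sf, sf, ← Fin.snoc_update]
lemma sum_dz : ∑ k : Fin d, dz d k = (fun _ => (1:ℤ)) := by
  funext j
  rw [Finset.sum_apply]
  simp [dz, Finset.sum_ite_eq]

lemma isTP_hatProd (n : ℝ) (ψ : Fin d → ℝ → ℝ) (B : Fin d → ℝ)
    (h : ∀ k, IsTP d n (B k) (dz d k) (fun x => ((ψ k (x (Fin.castSucc k)) : ℝ) : ℂ))) :
    IsTP d n (∏ k, B k) (fun _ => (1:ℤ))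
      (fun x => ((∏ k, ψ k (x (Fin.castSucc k)) : ℝ) : ℂ)) := by
  have h2 := isTP_prod Finset.univ (fun k => fun x => ((ψ k (x (Fin.castSucc k)) : ℝ) : ℂ)) B
    (fun k => dz d k) (fun k _ => h k)
  rw [sum_dz] at h2
  refine isTP_congr h2 ?_
  intro x
  rw [← Complex.ofReal_prod]

lemma coordProd_snoc (ψ : Fin d → ℝ → ℝ) (τ : ℝ → ℝ) (x : Eu (d+1)) :
    coordProd (sf ψ τ) x
      = (∏ k : Fin d, ψ k (x (Fin.castSucc k))) * τ (x (Fin.last d)) := by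
  rw [coordProd, Fin.prod_univ_castSucc]
  simp [sf]

def baseFam (d : ℕ) (n : ℝ) : Fin (d+1) → ℝ → ℝ := sf (fun _ => fA n) (fun t => t)

lemma baseFam_diff (n : ℝ) : ∀ i, Differentiable ℝ (baseFam d n i) := by
  intro i
  induction i using Fin.lastCases with
  | last => rw [baseFam, sf_last]; exact differentiable_id
  | cast k => rw [baseFam, sf_cast]; exact diff_fA n

lemma baseFam_diff' (n : ℝ) : ∀ i, Differentiable ℝ (deriv (baseFam d n i)) := by
  intro i
  induction i using Fin.lastCases with
  | last => rw [baseFam, sf_last, deriv_idf]; exact differentiable_const 1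
  | cast k => rw [baseFam, sf_cast, deriv_fA]; exact diff_fA' n

def epsIJ (d : ℕ) (i j : Fin (d+1)) : ℕ := if i = Fin.last d ∨ j = Fin.last d then 0 else 1

lemma entry_repr (n : ℝ) (hn : 1 ≤ n) (i j : Fin (d+1)) :
    ∃ T : Eu (d+1) → ℂ,
      IsTP d n (2*n^2) (fun _ => (1:ℤ)) T ∧
      (∀ x : Eu (d+1),
        ((pd2 (coordProd (baseFam d n)) i j x : ℝ) : ℂ)
          = ((x (Fin.last d) : ℝ) : ℂ) ^ (epsIJ d i j) * T x) ∧
      (i = Fin.last d → j = Fin.last d → T = fun _ => 0) := by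
  have h0 : (0:ℝ) ≤ n := le_trans zero_le_one hn
  have hpd2 := pd2_coordProd (baseFam d n) (baseFam_diff n) (baseFam_diff' n) i j
  induction j using Fin.lastCases with
  | last =>
    have e2 : Function.update (baseFam d n) (Fin.last d) (deriv (baseFam d n (Fin.last d)))
        = sf (fun _ => fA n) (fun _ => (1:ℝ)) := by
      rw [baseFam, sf_last, deriv_idf, update_sf_last]
    induction i using Fin.lastCases with
    | last =>
      -- i = j = last : entry is identically 0
      refine ⟨fun _ => 0, isTP_zero (by positivity), ?_, fun _ _ => rfl⟩
      intro x
      rw [hpd2]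
      have e3 : Function.update (sf (fun _ => fA n) (fun _ => (1:ℝ)))
          (Fin.last d) (deriv (sf (fun _ : Fin d => fA n) (fun _ => (1:ℝ)) (Fin.last d)))
          = sf (fun _ => fA n) (fun _ => (0:ℝ)) := by
        rw [sf_last, deriv_one, update_sf_last]
      rw [e2, e3, coordProd_snoc]
      simp
    | cast i₀ =>
      -- i = castSucc i₀, j = last
      have e3 : Function.update (sf (fun _ => fA n) (fun _ => (1:ℝ)))
          (Fin.castSucc i₀)
          (deriv (sf (fun _ : Fin d => fA n) (fun _ => (1:ℝ)) (Fin.castSucc i₀)))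
          = sf (Function.update (fun _ => fA n) i₀ (fA' n)) (fun _ => (1:ℝ)) := by
        rw [sf_cast, deriv_fA, update_sf_cast]
      set ψ : Fin d → ℝ → ℝ := Function.update (fun _ => fA n) i₀ (fA' n) with hψ
      refine ⟨fun x => ((∏ k, ψ k (x (Fin.castSucc k)) : ℝ) : ℂ), ?_, ?_, ?_⟩
      · refine isTP_mono (isTP_hatProd n ψ (Function.update (fun _ => (1:ℝ)) i₀ n) ?_)
          le_rfl ?_
        · intro k
          rcases eq_or_ne k i₀ with rfl | hk
          · simp only [hψ, Function.update_self]
            exact isTP_coord_fA' n h0 k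
          · simp only [hψ, Function.update_of_ne hk]
            exact isTP_coord_fA n k
        · rw [Finset.prod_update_of_mem (Finset.mem_univ i₀)]
          simp only [Finset.prod_const_one, mul_one]
          nlinarith
      · intro x
        rw [hpd2, e2, e3, coordProd_snoc]
        have : epsIJ d (Fin.castSucc i₀) (Fin.last d) = 0 := if_pos (Or.inr rfl)
        rw [this]
        push_cast
        ring
      · intro hcon
        exact absurd hcon (Fin.castSucc_lt_last i₀).ne
  | cast j₀ =>
    have e2 : Function.update (baseFam d n) (Fin.castSucc j₀)
        (deriv (baseFam d n (Fin.castSucc j₀)))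
        = sf (Function.update (fun _ => fA n) j₀ (fA' n)) (fun t : ℝ => t) := by
      rw [baseFam, sf_cast, deriv_fA, update_sf_cast]
    induction i using Fin.lastCases with
    | last =>
      -- i = last, j = castSucc j₀
      have e3 : Function.update (sf (Function.update (fun _ => fA n) j₀ (fA' n))
          (fun t : ℝ => t)) (Fin.last d)
          (deriv (sf (Function.update (fun _ : Fin d => fA n) j₀ (fA' n))
            (fun t : ℝ => t) (Fin.last d)))
          = sf (Function.update (fun _ => fA n) j₀ (fA' n)) (fun _ => (1:ℝ)) := by
        rw [sf_last, deriv_idf, update_sf_last]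
      set ψ : Fin d → ℝ → ℝ := Function.update (fun _ => fA n) j₀ (fA' n) with hψ
      refine ⟨fun x => ((∏ k, ψ k (x (Fin.castSucc k)) : ℝ) : ℂ), ?_, ?_, ?_⟩
      · refine isTP_mono (isTP_hatProd n ψ (Function.update (fun _ => (1:ℝ)) j₀ n) ?_)
          le_rfl ?_
        · intro k
          rcases eq_or_ne k j₀ with rfl | hk
          · simp only [hψ, Function.update_self]
            exact isTP_coord_fA' n h0 k
          · simp only [hψ, Function.update_of_ne hk]
            exact isTP_coord_fA n k
        · rw [Finset.prod_update_of_mem (Finset.mem_univ j₀)]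
          simp only [Finset.prod_const_one, mul_one]
          nlinarith
      · intro x
        rw [hpd2, e2, e3, coordProd_snoc]
        have : epsIJ d (Fin.last d) (Fin.castSucc j₀) = 0 := if_pos (Or.inl rfl)
        rw [this]
        push_cast
        ring
      · intro _ hcon
        exact absurd hcon (Fin.castSucc_lt_last j₀).ne
    | cast i₀ =>
      -- i = castSucc i₀, j = castSucc j₀
      rcases eq_or_ne i₀ j₀ with rfl | hij
      · -- diagonal
        have e3 : Function.update (sf (Function.update (fun _ => fA n) i₀ (fA' n))
            (fun t : ℝ => t)) (Fin.castSucc i₀)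
            (deriv (sf (Function.update (fun _ : Fin d => fA n) i₀ (fA' n))
              (fun t : ℝ => t) (Fin.castSucc i₀)))
            = sf (Function.update (fun _ => fA n) i₀ (fA'' n)) (fun t : ℝ => t) := by
          rw [sf_cast, Function.update_self, deriv_fA', update_sf_cast,
            Function.update_idem]
        set ψ : Fin d → ℝ → ℝ := Function.update (fun _ => fA n) i₀ (fA'' n) with hψ
        refine ⟨fun x => ((∏ k, ψ k (x (Fin.castSucc k)) : ℝ) : ℂ), ?_, ?_, ?_⟩
        · refine isTP_mono (isTP_hatProd n ψ (Function.update (fun _ => (1:ℝ)) i₀ (2*n^2)) ?_)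
            le_rfl ?_
          · intro k
            rcases eq_or_ne k i₀ with rfl | hk
            · simp only [hψ, Function.update_self]
              exact isTP_coord_fA'' n k
            · simp only [hψ, Function.update_of_ne hk]
              exact isTP_coord_fA n k
          · rw [Finset.prod_update_of_mem (Finset.mem_univ i₀)]
            simp only [Finset.prod_const_one, mul_one, le_refl]
        · intro x
          rw [hpd2, e2, e3, coordProd_snoc]
          have : epsIJ d (Fin.castSucc i₀) (Fin.castSucc i₀) = 1 :=
            if_neg (by simp [(Fin.castSucc_lt_last _).ne])
          rw [this]
          push_cast
          ring
        · intro hcon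
          exact absurd hcon (Fin.castSucc_lt_last i₀).ne
      · -- off-diagonal
        have e3 : Function.update (sf (Function.update (fun _ => fA n) j₀ (fA' n))
            (fun t : ℝ => t)) (Fin.castSucc i₀)
            (deriv (sf (Function.update (fun _ : Fin d => fA n) j₀ (fA' n))
              (fun t : ℝ => t) (Fin.castSucc i₀)))
            = sf (Function.update (Function.update (fun _ => fA n) j₀ (fA' n)) i₀ (fA' n))
              (fun t : ℝ => t) := by
          rw [sf_cast, Function.update_of_ne hij, deriv_fA, update_sf_cast]
        set ψ : Fin d → ℝ → ℝ :=
          Function.update (Function.update (fun _ => fA n) j₀ (fA' n)) i₀ (fA' n) with hψ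
        refine ⟨fun x => ((∏ k, ψ k (x (Fin.castSucc k)) : ℝ) : ℂ), ?_, ?_, ?_⟩
        · refine isTP_mono (isTP_hatProd n ψ
            (Function.update (Function.update (fun _ => (1:ℝ)) j₀ n) i₀ n) ?_) le_rfl ?_
          · intro k
            rcases eq_or_ne k i₀ with rfl | hk
            · simp only [hψ, Function.update_self]
              exact isTP_coord_fA' n h0 k
            · rcases eq_or_ne k j₀ with rfl | hk'
              · simp only [hψ, Function.update_of_ne hk, Function.update_self]
                exact isTP_coord_fA' n h0 k
              · simp only [hψ, Function.update_of_ne hk, Function.update_of_ne hk']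
                exact isTP_coord_fA n k
          · rw [Finset.prod_update_of_mem (Finset.mem_univ i₀), Finset.sdiff_singleton_eq_erase,
              Finset.prod_update_of_mem (Finset.mem_erase.mpr ⟨hij.symm, Finset.mem_univ j₀⟩)]
            simp only [Finset.prod_const_one, mul_one]
            nlinarith
        · intro x
          rw [hpd2, e2, e3, coordProd_snoc]
          have : epsIJ d (Fin.castSucc i₀) (Fin.castSucc j₀) = 1 :=
            if_neg (by simp [(Fin.castSucc_lt_last _).ne])
          rw [this]
          push_cast
          ring
        · intro hcon
          exact absurd hcon (Fin.castSucc_lt_last i₀).ne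

end Stmt16

namespace Stmt16

variable {d : ℕ}

lemma ffun_eq (n : ℝ) (h : 0 < d+1) : ffun (d+1) h n = coordProd (baseFam d n) := by
  funext x
  rw [ffun, gfun, baseFam, coordProd_snoc, mul_comm]
  congr 1

lemma det_repr (n : ℝ) (hn : 1 ≤ n) (m : ℕ) (row col : Fin m → Fin (d+1))
    (hrow : Function.Injective row) (hcol : Function.Injective col) :
    ∃ α : ℕ, α ≤ m ∧ ∃ Ttot : Eu (d+1) → ℂ,
      IsTP d n ((m.factorial : ℝ) * (2*n^2)^m) (fun _ => (m:ℤ)) Ttot ∧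
      ∀ x : Eu (d+1),
        ((Matrix.of fun a b : Fin m =>
          pd2 (coordProd (baseFam d n)) (row a) (col b) x).det : ℂ)
        = ((x (Fin.last d) : ℝ) : ℂ) ^ α * Ttot x := by
  classical
  choose T hT1 hT2 hT3 using fun (a b : Fin m) => entry_repr n hn (row a) (col b)
  set α := m - ((if ∃ a, row a = Fin.last d then 1 else 0)
    + (if ∃ b, col b = Fin.last d then 1 else 0)) with hα
  refine ⟨α, Nat.sub_le _ _,
    fun x => ∑ σ : Equiv.Perm (Fin m), ((Equiv.Perm.sign σ : ℤ) : ℂ) * ∏ b, T (σ b) b x,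
    ?_, ?_⟩
  · -- IsTP of the total sum
    have hBnn : (0:ℝ) ≤ (2*n^2)^m := by positivity
    have hstep : ∀ σ ∈ (Finset.univ : Finset (Equiv.Perm (Fin m))),
        IsTP d n ((2*n^2)^m) (fun _ => (m:ℤ))
          (fun x => ((Equiv.Perm.sign σ : ℤ) : ℂ) * ∏ b, T (σ b) b x) := by
      intro σ _
      have hprod := isTP_prod Finset.univ (fun b => T (σ b) b) (fun _ => 2*n^2)
        (fun _ => (fun _ => (1:ℤ))) (fun b _ => hT1 (σ b) b)
      have hM : (∑ _b : Fin m, (fun _ => (1:ℤ)) : Fin d → ℤ) = fun _ => (m:ℤ) := by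
        funext j
        rw [Finset.sum_apply]
        simp
      have hB : (∏ _b : Fin m, (2*n^2)) = (2*n^2)^m := by
        rw [Finset.prod_const, Finset.card_univ, Fintype.card_fin]
      rw [hM, hB] at hprod
      have habs : ‖((Equiv.Perm.sign σ : ℤ) : ℂ)‖ = 1 := by
        rcases Int.units_eq_one_or (Equiv.Perm.sign σ) with h | h <;> rw [h] <;> simp
      have := isTP_cmul ((Equiv.Perm.sign σ : ℤ) : ℂ) hprod
      rw [habs, one_mul] at this
      exact this
    have hsum := isTP_sum Finset.univ _ _ hstep hBnn
    refine isTP_mono hsum le_rfl ?_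
    rw [Finset.card_univ, Fintype.card_perm, Fintype.card_fin]
  · -- evaluation
    intro x
    set xl : ℂ := ((x (Fin.last d) : ℝ) : ℂ) with hxl
    have key : ∀ σ : Equiv.Perm (Fin m),
        xl ^ (∑ b, epsIJ d (row (σ b)) (col b)) * ∏ b, T (σ b) b x
          = xl ^ α * ∏ b, T (σ b) b x := by
      intro σ
      by_cases hdeg : ∃ b, row (σ b) = Fin.last d ∧ col b = Fin.last d
      · obtain ⟨b, hb1, hb2⟩ := hdeg
        have hz : T (σ b) b = fun _ => 0 := hT3 _ _ hb1 hb2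
        rw [Finset.prod_eq_zero (Finset.mem_univ b) (by rw [hz])]
        ring
      · have hsum : (∑ b, epsIJ d (row (σ b)) (col b)) = α := by
          have hQ : ∀ b : Fin m, epsIJ d (row (σ b)) (col b)
              = if (row (σ b) = Fin.last d ∨ col b = Fin.last d) then 0 else 1 := fun b => rfl
          rw [Finset.sum_congr rfl fun b _ => hQ b]
          rw [Finset.sum_ite, Finset.sum_const, Finset.sum_const]
          simp only [smul_eq_mul, mul_zero, mul_one, zero_add]
          have hcards : (Finset.univ.filter
                (fun b => row (σ b) = Fin.last d ∨ col b = Fin.last d)).card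
              + (Finset.univ.filter
                (fun b => ¬(row (σ b) = Fin.last d ∨ col b = Fin.last d))).card = m := by
            rw [Finset.card_filter_add_card_filter_not]
            simp
          have hQ1 : (Finset.univ.filter (fun b => row (σ b) = Fin.last d)).card
              = if ∃ a, row a = Fin.last d then 1 else 0 := by
            split_ifs with hR
            · obtain ⟨a₀, ha₀⟩ := hR
              rw [show Finset.univ.filter (fun b => row (σ b) = Fin.last d) = {σ.symm a₀} from ?_]
              · exact Finset.card_singleton _
              · ext b
                simp only [Finset.mem_filter, Finset.mem_univ, true_and, Finset.mem_singleton]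
                constructor
                · intro hb
                  have : σ b = a₀ := hrow (hb.trans ha₀.symm)
                  rw [← this]; simp
                · rintro rfl
                  simpa using ha₀
            · rw [Finset.card_eq_zero.mpr]
              rw [Finset.filter_eq_empty_iff]
              intro b _
              exact fun hb => hR ⟨σ b, hb⟩
          have hQ2 : (Finset.univ.filter (fun b => col b = Fin.last d)).card
              = if ∃ b, col b = Fin.last d then 1 else 0 := by
            split_ifs with hC
            · obtain ⟨b₀, hb₀⟩ := hC
              rw [show Finset.univ.filter (fun b => col b = Fin.last d) = {b₀} from ?_]
              · exact Finset.card_singleton _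
              · ext b
                simp only [Finset.mem_filter, Finset.mem_univ, true_and, Finset.mem_singleton]
                constructor
                · intro hb; exact hcol (hb.trans hb₀.symm)
                · rintro rfl; exact hb₀
            · rw [Finset.card_eq_zero.mpr]
              rw [Finset.filter_eq_empty_iff]
              intro b _
              exact fun hb => hC ⟨b, hb⟩
          have hunion : (Finset.univ.filter
              (fun b => row (σ b) = Fin.last d ∨ col b = Fin.last d)).card
              = (if ∃ a, row a = Fin.last d then 1 else 0)
                + (if ∃ b, col b = Fin.last d then 1 else 0) := by
            rw [Finset.filter_or, Finset.card_union_of_disjoint, hQ1, hQ2]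
            rw [Finset.disjoint_filter]
            intro b _ hb1 hb2
            exact hdeg ⟨b, hb1, hb2⟩
          omega
        rw [hsum]
    calc ((Matrix.of fun a b : Fin m =>
            pd2 (coordProd (baseFam d n)) (row a) (col b) x).det : ℂ)
        = (Complex.ofRealHom.mapMatrix (Matrix.of fun a b : Fin m =>
            pd2 (coordProd (baseFam d n)) (row a) (col b) x)).det := by
          rw [show (((Matrix.of fun a b : Fin m =>
            pd2 (coordProd (baseFam d n)) (row a) (col b) x).det : ℝ) : ℂ)
            = Complex.ofRealHom ((Matrix.of fun a b : Fin m =>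
            pd2 (coordProd (baseFam d n)) (row a) (col b) x).det) from rfl, RingHom.map_det]
      _ = ∑ σ : Equiv.Perm (Fin m), ((Equiv.Perm.sign σ : ℤ) : ℂ)
            * ∏ b, ((pd2 (coordProd (baseFam d n)) (row (σ b)) (col b) x : ℝ) : ℂ) := by
          rw [Matrix.det_apply]
          apply Finset.sum_congr rfl
          intro σ _
          rw [Units.smul_def, zsmul_eq_mul]
          simp [RingHom.mapMatrix_apply, Matrix.map_apply]
      _ = ∑ σ : Equiv.Perm (Fin m), ((Equiv.Perm.sign σ : ℤ) : ℂ)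
            * (xl ^ α * ∏ b, T (σ b) b x) := by
          apply Finset.sum_congr rfl
          intro σ _
          congr 1
          rw [Finset.prod_congr rfl fun b _ => hT2 (σ b) b x, Finset.prod_mul_distrib,
            Finset.prod_pow_eq_pow_sum]
          exact key σ
      _ = xl ^ α * ∑ σ : Equiv.Perm (Fin m), ((Equiv.Perm.sign σ : ℤ) : ℂ)
            * ∏ b, T (σ b) b x := by
          rw [Finset.mul_sum]
          apply Finset.sum_congr rfl
          intro σ _
          ring

end Stmt16

end

noncomputable section
open Stmt16

/-- Remark 5.4: Fourier expansion of the submatrix determinant.  There is `C > 0`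
depending only on `N` such that `det(H_𝓵^{(I,J)})(x) = x_N^α Σ_{z ∈ Λ} c_z e^{2 n_{ℓ*} i z·x̂}`
with `α ≤ m` and `|c_z| ≤ C n_{ℓ*}^{2m}`. -/
theorem stmt16 (N : ℕ) (hN : 3 ≤ N) :
    ∃ C : ℝ, 0 < C ∧
    ∀ k : ℕ, 2 ≤ k → ∀ l : Fin N → ℕ,
      (∀ i, l i ∈ Finset.Icc 1 k) → (¬ ∀ i j, l i = l j) →
    ∀ lstar : ℕ, lstar = Finset.univ.sup l →
    ∀ I : Finset (Fin N), I = Finset.filter (fun i => l i = lstar) Finset.univ →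
    ∀ (m : ℕ) (hm : I.card = m) (J : Finset (Fin N)) (hJ : J.card = m),
      ∃ α : ℕ, α ≤ m ∧
      ∃ c : (Fin (N-1) → ℤ) → ℂ,
        (∀ x : Eu N,
          ((Matrix.of fun (a b : Fin m) =>
              pd2 (ffun N (by omega) ((nseq N k (l ((I.orderIsoOfFin hm a) : Fin N)) : ℝ)))
                ((I.orderIsoOfFin hm a) : Fin N) ((J.orderIsoOfFin hJ b) : Fin N) x).det : ℂ)
          = ((x (lastIdx N (by omega)) : ℝ) : ℂ)^α *
            ∑ z ∈ Finset.Icc (fun _ : Fin (N-1) => -((N:ℤ)-1)) (fun _ : Fin (N-1) => (N:ℤ)-1),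
              c z * Complex.exp (2 * ((nseq N k lstar : ℝ) : ℂ) * Complex.I *
                ∑ i : Fin (N-1), (z i : ℂ) * ((x (Fin.castLE (Nat.sub_le N 1) i) : ℝ) : ℂ))) ∧
        (∀ z ∈ Finset.Icc (fun _ : Fin (N-1) => -((N:ℤ)-1)) (fun _ : Fin (N-1) => (N:ℤ)-1),
          ‖c z‖ ≤ C * ((nseq N k lstar : ℝ))^(2*m)) := by
  obtain ⟨d, rfl⟩ : ∃ d, N = d + 1 := ⟨N - 1, by omega⟩
  refine ⟨((d+1).factorial : ℝ) * 2^(d+1), by positivity, ?_⟩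
  intro k hk l hl hne lstar hlstar I hI m hm J hJ
  set n : ℝ := ((nseq (d+1) k lstar : ℕ) : ℝ) with hn_def
  have hn1 : (1:ℝ) ≤ n := by
    rw [hn_def]
    exact_mod_cast Nat.one_le_pow _ _ (by omega)
  have hmd : m ≤ d := by
    push_neg at hne
    obtain ⟨i0, j0, hij⟩ := hne
    have hIne : I ≠ Finset.univ := by
      intro hIu
      have h1 : l i0 = lstar := by
        have : i0 ∈ I := hIu ▸ Finset.mem_univ i0
        rw [hI] at this
        exact (Finset.mem_filter.mp this).2
      have h2 : l j0 = lstar := by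
        have : j0 ∈ I := hIu ▸ Finset.mem_univ j0
        rw [hI] at this
        exact (Finset.mem_filter.mp this).2
      exact hij (h1.trans h2.symm)
    have hlt : I.card < d + 1 := by
      have h := Finset.card_lt_card (Finset.ssubset_univ_iff.mpr hIne)
      rwa [Finset.card_univ, Fintype.card_fin] at h
    omega
  have hsubI : ∀ x ∈ I, l x = lstar := by
    intro x hx
    rw [hI] at hx
    exact (Finset.mem_filter.mp hx).2
  have hrowval : ∀ a : Fin m, l ((I.orderIsoOfFin hm a) : Fin (d+1)) = lstar :=
    fun a => hsubI _ (I.orderIsoOfFin hm a).2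
  have hrowinj : Function.Injective
      (fun a : Fin m => ((I.orderIsoOfFin hm a) : Fin (d+1))) :=
    fun a b hab => (I.orderIsoOfFin hm).injective (Subtype.ext hab)
  have hcolinj : Function.Injective
      (fun b : Fin m => ((J.orderIsoOfFin hJ b) : Fin (d+1))) :=
    fun a b hab => (J.orderIsoOfFin hJ).injective (Subtype.ext hab)
  obtain ⟨α, hαm, Ttot, hTP, heval⟩ := det_repr n hn1 m _ _ hrowinj hcolinj
  have hMle : (fun _ : Fin d => (m:ℤ)) ≤ (fun _ : Fin d => ((d+1:ℕ):ℤ) - 1) := by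
    intro i
    push_cast
    omega
  obtain ⟨c, hc_eval, hc_bound⟩ := isTP_extract hTP hMle
  refine ⟨α, hαm, c, ?_, ?_⟩
  · intro x
    have hmat : (Matrix.of fun (a b : Fin m) =>
        pd2 (ffun (d+1) (by omega)
            ((nseq (d+1) k (l ((I.orderIsoOfFin hm a) : Fin (d+1))) : ℝ)))
          ((I.orderIsoOfFin hm a) : Fin (d+1)) ((J.orderIsoOfFin hJ b) : Fin (d+1)) x)
        = Matrix.of fun (a b : Fin m) =>
            pd2 (coordProd (baseFam d n)) ((I.orderIsoOfFin hm a) : Fin (d+1))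
              ((J.orderIsoOfFin hJ b) : Fin (d+1)) x := by
      funext a b
      simp only [Matrix.of_apply]
      rw [hrowval a]
      exact congrArg (fun u => pd2 u (((I.orderIsoOfFin hm) a : Fin (d+1)))
        (((J.orderIsoOfFin hJ) b : Fin (d+1))) x)
        (ffun_eq ((nseq (d+1) k lstar : ℕ) : ℝ) (by omega))
    have h1 := congrArg (fun M : Matrix (Fin m) (Fin m) ℝ => ((M.det : ℝ) : ℂ)) hmat
    have h2 := heval x
    rw [hc_eval x] at h2
    exact h1.trans h2
  · intro z hz
    calc ‖c z‖ ≤ (m.factorial : ℝ) * (2*n^2)^m := hc_bound z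
      _ ≤ ((d+1).factorial : ℝ) * 2^(d+1) * n^(2*m) := by
          rw [mul_pow, pow_mul]
          have h1 : (m.factorial : ℝ) ≤ ((d+1).factorial : ℝ) :=
            Nat.cast_le.mpr (Nat.factorial_le (by omega))
          have h2 : (2:ℝ)^m ≤ 2^(d+1) := pow_le_pow_right₀ (by norm_num) (by omega)
          have hnn : (0:ℝ) ≤ (n^2)^m := by positivity
          calc (m.factorial : ℝ) * ((2:ℝ)^m * (n^2)^m)
              = ((m.factorial : ℝ) * (2:ℝ)^m) * (n^2)^m := by ring
            _ ≤ (((d+1).factorial : ℝ) * 2^(d+1)) * (n^2)^m := by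
                refine mul_le_mul_of_nonneg_right ?_ hnn
                exact mul_le_mul h1 h2 (by positivity) (by positivity)
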